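/- Let E be a real normed vector space and let D ⊆ E be a set of points containing two distinct points x_b and x_k. For a point x_g ∈ D, define its Voronoi cell V_D(x_g) = { x ∈ E : for all x' ∈ D, ‖x_g − x‖ ≤ ‖x' − x‖ }. Let ω ∈ ℝ with 1/2 < ω ≤ 1 and set x_e = ω · x_b + (1 − ω) · x_k. Then x_e ∉ V_D(x_k); that is, the generated query point never lies in the Voronoi cell of the neighbor x_k. -/
import Mathlib

/-- The Voronoi cell of a site `x_g` with respect to a dataset `D` in a real
normed vector space: all points at least as close to `x_g` as to any site of `D`. -/
def voronoiCell {E : Type*} [NormedAddCommGroup E] [NormedSpace ℝ E]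
    (D : Set E) (x_g : E) : Set E :=
  {x | ∀ x' ∈ D, ‖x_g - x‖ ≤ ‖x' - x‖}

/-- The generated query point `x_e = ω • x_b + (1 - ω) • x_k` with `1/2 < ω ≤ 1`
never lies in the Voronoi cell of the neighbor `x_k`. -/
theorem generated_query_not_in_neighbor_cell
    {E : Type*} [NormedAddCommGroup E] [NormedSpace ℝ E]
    (D : Set E) (x_b x_k : E) (hb : x_b ∈ D) (hk : x_k ∈ D) (hne : x_b ≠ x_k)
    (ω : ℝ) (hω₁ : 1 / 2 < ω) (hω₂ : ω ≤ 1) :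
    ω • x_b + (1 - ω) • x_k ∉ voronoiCell D x_k := by
  intro h
  have key := h x_b hb
  have h1 : x_k - (ω • x_b + (1 - ω) • x_k) = ω • (x_k - x_b) := by
    rw [smul_sub]; module
  have h2 : x_b - (ω • x_b + (1 - ω) • x_k) = (1 - ω) • (x_b - x_k) := by
    rw [smul_sub]; module
  rw [h1, h2, norm_smul, norm_smul] at key
  have hnorm : 0 < ‖x_k - x_b‖ := by
    rw [norm_pos_iff, sub_ne_zero]; exact fun h => hne h.symm
  rw [norm_sub_rev x_b x_k] at key
  have hωpos : 0 < ω := by linarith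
  have h1ω : 0 ≤ 1 - ω := by linarith
  rw [Real.norm_of_nonneg hωpos.le, Real.norm_of_nonneg h1ω] at key
  have : ω ≤ 1 - ω := le_of_mul_le_mul_right key hnorm
  linarith
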